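/- arXiv:1908.04850 — 4 statements merged into one kernel-verified Lean document; each statement's English description precedes it below -/
import Mathlib

section
/- The rational function h(u) = 2(1 + 19u + 51u² + 225u³) / ((1+u)(1+3u)³(1+9u)) is strictly decreasing on (0, ∞) and satisfies h(1/3) = 1. Consequently, for every u > 1/3 one has h(u) < 1. -/
/-- The map `h(u) = 2(1 + 19u + 51u² + 225u³)/((1+u)(1+3u)³(1+9u))` is strictly
decreasing on `(0, ∞)`, satisfies `h(1/3) = 1`, and hence `h(u) < 1` for `u > 1/3`. -/
theorem rational_function_decreasing_nuM
    (h : ℝ → ℝ)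
    (hh : ∀ u, h u = 2 * (1 + 19 * u + 51 * u ^ 2 + 225 * u ^ 3) /
      ((1 + u) * (1 + 3 * u) ^ 3 * (1 + 9 * u))) :
    StrictAntiOn h (Set.Ioi (0 : ℝ)) ∧
    h (1 / 3) = 1 ∧
    (∀ u : ℝ, 1 / 3 < u → h u < 1) := by
  have hD : ∀ u : ℝ, 0 < u → 0 < (1 + u) * (1 + 3 * u) ^ 3 * (1 + 9 * u) := by
    intro u hu; positivity
  have hmono : StrictAntiOn h (Set.Ioi (0 : ℝ)) := by
    intro a ha b hb hab
    simp only [Set.mem_Ioi] at ha hb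
    rw [hh a, hh b, div_lt_div_iff₀ (hD b hb) (hD a ha)]
    have hQ : 0 < 150 * a^0 * b^1 + 306 * a^0 * b^2 + 1026 * a^0 * b^3 + 486 * a^0 * b^4 + 150 * a^1 * b^0 + 3156 * a^1 * b^1 + 6840 * a^1 * b^2 + 19980 * a^1 * b^3 + 9234 * a^1 * b^4 + 306 * a^2 * b^0 + 6840 * a^2 * b^1 + 1836 * a^2 * b^2 + 61560 * a^2 * b^3 + 24786 * a^2 * b^4 + 1026 * a^3 * b^0 + 19980 * a^3 * b^1 + 61560 * a^3 * b^2 + 255636 * a^3 * b^3 + 109350 * a^3 * b^4 + 486 * a^4 * b^0 + 9234 * a^4 * b^1 + 24786 * a^4 * b^2 + 109350 * a^4 * b^3 := by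
      positivity
    nlinarith [mul_pos (sub_pos.2 hab) hQ]
  have hval : h (1 / 3) = 1 := by rw [hh]; norm_num
  refine ⟨hmono, hval, fun u hu => ?_⟩
  have : h u < h (1 / 3) := hmono (by norm_num) (Set.mem_Ioi.2 (lt_trans (by norm_num) hu)) hu
  rwa [hval] at this
end

section
/- Let K(z) be a formal power series with K(0) = 0, over a commutative ring in a second variable x. Define N = K/(1 − xK) and S = K·(xK)/(1 − xK) (i.e., N = K·SEQ(xK) and S = K·SEQ_{≥1}(xK) as formal power series, where SEQ(w) = 1/(1−w)). Then S = xN²/(1 + xN) and N = S + K. -/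
open PowerSeries

/-- For formal power series with `K(0) = 0`, if `N = K·SEQ(xK)` and
`S = K·SEQ_{≥1}(xK)` (expressed via `N(1−xK) = K` and `S(1−xK) = xK²`),
then `S = xN²/(1+xN)` (i.e. `S(1+xN) = xN²`) and `N = S + K`. -/
theorem series_network_identity
    (A : Type*) [CommRing A] (x : A) (K N S : PowerSeries A)
    (hK0 : PowerSeries.constantCoeff K = 0)
    (hN : N * (1 - PowerSeries.C x * K) = K)
    (hS : S * (1 - PowerSeries.C x * K) = PowerSeries.C x * K ^ 2) :
    S * (1 + PowerSeries.C x * N) = PowerSeries.C x * N ^ 2 ∧ N = S + K := by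
  set u : PowerSeries A := 1 - PowerSeries.C x * K with hu_def
  have hu : IsUnit u := by
    rw [PowerSeries.isUnit_iff_constantCoeff]
    simp [hu_def, hK0]
  constructor
  · have h2 : (S * (1 + PowerSeries.C x * N)) * (u * u)
        = (PowerSeries.C x * N ^ 2) * (u * u) := by
      have lhs : (S * (1 + PowerSeries.C x * N)) * (u * u)
          = (S * u) * (u + PowerSeries.C x * (N * u)) := by ring
      have rhs : (PowerSeries.C x * N ^ 2) * (u * u)
          = PowerSeries.C x * (N * u) * (N * u) := by ring
      rw [lhs, rhs, hN, hS, hu_def]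
      ring
    exact (hu.mul hu).mul_right_cancel h2
  · have h3 : N * u = (S + K) * u := by
      rw [add_mul, hS, hN, hu_def]
      ring
    exact hu.mul_left_cancel (by rw [mul_comm u N, mul_comm u (S + K), h3])
end

section
/- Let X and Y be independent nonnegative-integer random variables such that, as n → ∞, P(X = n)/P(Y = n) → λ for some λ ∈ (0, ∞), P(Y = n+1)/P(Y = n) → 1, and P(X + Y = n)/(P(X = n) + P(Y = n)) → 1. Then, setting p = 1/(1 + λ), for every fixed k ≥ 0: P(X = k | X + Y = n) → p·P(X = k) and P(Y = k | X + Y = n) → (1 − p)·P(Y = k). -/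
open Filter

/-- Two-sided condensation: if `P(X=n)/P(Y=n) → λ ∈ (0,∞)`, `P(Y=n+1)/P(Y=n) → 1`
and `P(X+Y=n)/(P(X=n)+P(Y=n)) → 1`, then with `p = 1/(1+λ)`, for every fixed `k`,
`P(X=k | X+Y=n) → p·P(X=k)` and `P(Y=k | X+Y=n) → (1−p)·P(Y=k)`. -/
theorem two_sided_condensation
    (pX pY : ℕ → ℝ) (hX : ∀ k, 0 ≤ pX k) (hY : ∀ k, 0 ≤ pY k)
    (hXsum : HasSum pX 1) (hYsum : HasSum pY 1)
    (pXY : ℕ → ℝ) (hconv : ∀ n, pXY n = ∑ k ∈ Finset.range (n + 1), pX k * pY (n - k))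
    (hXpos : ∀ᶠ n in atTop, 0 < pX n) (hYpos : ∀ᶠ n in atTop, 0 < pY n)
    (lam : ℝ) (hlam : 0 < lam)
    (hXYratio : Tendsto (fun n => pX n / pY n) atTop (nhds lam))
    (hYshift : Tendsto (fun n => pY (n + 1) / pY n) atTop (nhds 1))
    (hsumratio : Tendsto (fun n => pXY n / (pX n + pY n)) atTop (nhds 1))
    (p : ℝ) (hp : p = 1 / (1 + lam)) :
    ∀ k : ℕ,
      Tendsto (fun n => pX k * pY (n - k) / pXY n) atTop (nhds (p * pX k)) ∧
      Tendsto (fun n => pY k * pX (n - k) / pXY n) atTop (nhds ((1 - p) * pY k)) :=  by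
  have hlam1 : (0:ℝ) < 1 + lam := by linarith
  intro k
  -- shifted positivity
  have hYposAdd : ∀ m : ℕ, ∀ᶠ n in atTop, 0 < pY (n + m) := fun m =>
    (tendsto_add_atTop_nat m).eventually hYpos
  -- Lemma A : pY (n+m) / pY n → 1
  have hA : ∀ m : ℕ, Tendsto (fun n => pY (n + m) / pY n) atTop (nhds 1) := by
    intro m
    induction m with
    | zero =>
      have hc : Tendsto (fun _ : ℕ => (1:ℝ)) atTop (nhds 1) := tendsto_const_nhds
      apply Tendsto.congr' _ hc
      filter_upwards [hYpos] with n hn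
      simp [div_self hn.ne']
    | succ m ih =>
      have h1 : Tendsto (fun n => pY (n + m + 1) / pY (n + m)) atTop (nhds 1) :=
        hYshift.comp (tendsto_add_atTop_nat m)
      have h2 := h1.mul ih
      rw [one_mul] at h2
      apply h2.congr'
      filter_upwards [hYposAdd m] with n hn
      have hne : pY (n + m) ≠ 0 := hn.ne'
      show pY (n + m + 1) / pY (n + m) * (pY (n + m) / pY n) = pY (n + (m + 1)) / pY n
      rw [show n + (m + 1) = n + m + 1 from by ring]
      field_simp
  -- Lemma B : pY (n-k) / pY n → 1
  have hB : Tendsto (fun n => pY (n - k) / pY n) atTop (nhds 1) := by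
    have hinv : Tendsto (fun n => (pY (n + k) / pY n)⁻¹) atTop (nhds 1) := by
      have := (hA k).inv₀ one_ne_zero
      simpa using this
    have hcomp := hinv.comp (tendsto_sub_atTop_nat k)
    apply hcomp.congr'
    filter_upwards [eventually_ge_atTop k] with n hn
    show (pY (n - k + k) / pY (n - k))⁻¹ = pY (n - k) / pY n
    rw [Nat.sub_add_cancel hn, inv_div]
  -- Lemma C : pXY n / pY n → 1 + lam
  have hC : Tendsto (fun n => pXY n / pY n) atTop (nhds (1 + lam)) := by
    have h2 : Tendsto (fun n => pX n / pY n + 1) atTop (nhds (lam + 1)) :=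
      hXYratio.add tendsto_const_nhds
    have h3 := hsumratio.mul h2
    rw [one_mul] at h3
    have h4 : Tendsto (fun n => pXY n / (pX n + pY n) * (pX n / pY n + 1)) atTop
        (nhds (1 + lam)) := by rw [add_comm 1 lam]; exact h3
    apply h4.congr'
    filter_upwards [hXpos, hYpos] with n hx hy
    have h5 : pX n + pY n ≠ 0 := by positivity
    field_simp
  -- eventual positivity of pXY
  have hCpos : ∀ᶠ n in atTop, 0 < pXY n := by
    have h6 : ∀ᶠ n in atTop, 0 < pXY n / pY n :=
      hC.eventually (eventually_gt_nhds hlam1)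
    filter_upwards [h6, hYpos] with n h1 h2
    have := mul_pos h1 h2
    rwa [div_mul_cancel₀ _ h2.ne'] at this
  have hYposSub : ∀ᶠ n in atTop, 0 < pY (n - k) :=
    (tendsto_sub_atTop_nat k).eventually hYpos
  have hXYk : Tendsto (fun n => pX (n - k) / pY (n - k)) atTop (nhds lam) :=
    hXYratio.comp (tendsto_sub_atTop_nat k)
  constructor
  · have T : Tendsto (fun n => pX k * (pY (n - k) / pY n / (pXY n / pY n))) atTop
        (nhds (pX k * (1 / (1 + lam)))) :=
      tendsto_const_nhds.mul (hB.div hC hlam1.ne')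
    have : pX k * (1 / (1 + lam)) = p * pX k := by rw [hp]; ring
    rw [this] at T
    apply T.congr'
    filter_upwards [hYpos, hCpos] with n hy hxy
    field_simp
  · have T : Tendsto (fun n => pY k * (pX (n - k) / pY (n - k) * (pY (n - k) / pY n)
        / (pXY n / pY n))) atTop (nhds (pY k * (lam * 1 / (1 + lam)))) :=
      tendsto_const_nhds.mul ((hXYk.mul hB).div hC hlam1.ne')
    have : pY k * (lam * 1 / (1 + lam)) = (1 - p) * pY k := by
      rw [hp]; field_simp; ring
    rw [this] at T
    apply T.congr'
    filter_upwards [hYpos, hCpos, hYposSub] with n hy hxy hys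
    field_simp
end

section
/- Let (g_n)_{n≥0} be a nonnegative sequence with g_n > 0 for all large n such that g_n/g_{n+1} → ρ ∈ (0, ∞) and (1/g_n)·Σ_{i+j=n} g_i g_j → 2·G(ρ) < ∞, where G(z) = Σ g_n z^n. Then for every fixed m ≥ 1, (1/g_n)·Σ_{i_1+⋯+i_m=n} g_{i_1}⋯g_{i_m} → m·G(ρ)^{m−1} as n → ∞. -/
open Filter Finset

noncomputable def Dconv (g : ℕ → ℝ) : ℕ → ℕ → ℝ
  | 0, n => if n = 0 then 1 else 0
  | m+1, n => ∑ i ∈ Finset.range (n+1), g i * Dconv g m (n - i)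

lemma Dconv_nonneg (g : ℕ → ℝ) (hg : ∀ n, 0 ≤ g n) : ∀ m n, 0 ≤ Dconv g m n := by
  intro m
  induction m with
  | zero => intro n; simp only [Dconv]; split <;> norm_num
  | succ m ih =>
    intro n
    exact Finset.sum_nonneg fun i _ => mul_nonneg (hg i) (ih _)

lemma tsum_eq_Dconv (g : ℕ → ℝ) : ∀ m n,
    (∑' f : Fin m → ℕ, if (∑ i, f i) = n then ∏ i, g (f i) else 0) = Dconv g m n := by
  intro m
  induction m with
  | zero =>
    intro n
    rw [tsum_eq_single (default : Fin 0 → ℕ) (fun b hb => absurd (Subsingleton.elim b default) hb)]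
    simp [Dconv, eq_comm]
  | succ m ih =>
    intro n
    rw [← Equiv.tsum_eq (Fin.consEquiv fun _ : Fin (m+1) => ℕ)]
    have hsumm : Summable (fun p : ℕ × (Fin m → ℕ) =>
        if (∑ i, (Fin.consEquiv fun _ : Fin (m+1) => ℕ) p i) = n
          then ∏ i, g ((Fin.consEquiv fun _ : Fin (m+1) => ℕ) p i) else 0) := by
      apply summable_of_ne_finset_zero
        (s := Finset.range (n+1) ×ˢ Fintype.piFinset fun _ : Fin m => Finset.range (n+1))
      rintro ⟨j, f⟩ hp
      simp only [Finset.mem_product, Finset.mem_range, Fintype.mem_piFinset, not_and_or,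
        not_forall, not_lt] at hp
      have hcond : ¬ (∑ i, (Fin.consEquiv fun _ : Fin (m+1) => ℕ) (j, f) i) = n := by
        simp only [Fin.consEquiv_apply, Fin.sum_cons]
        rcases hp with h | ⟨i, hi⟩
        · omega
        · have : f i ≤ ∑ i, f i := Finset.single_le_sum (fun i _ => Nat.zero_le _) (mem_univ i)
          omega
      exact if_neg hcond
    rw [Summable.tsum_prod' hsumm hsumm.prod_factor]
    have hinner : ∀ j : ℕ, (∑' f : Fin m → ℕ,
        if (∑ i, (Fin.consEquiv fun _ : Fin (m+1) => ℕ) (j, f) i) = n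
          then ∏ i, g ((Fin.consEquiv fun _ : Fin (m+1) => ℕ) (j, f) i) else 0)
        = if j ≤ n then g j * Dconv g m (n - j) else 0 := by
      intro j
      simp only [Fin.consEquiv_apply, Fin.sum_cons, Fin.prod_univ_succ, Fin.cons_zero, Fin.cons_succ]
      by_cases hj : j ≤ n
      · rw [if_pos hj]
        have hpt : ∀ f : Fin m → ℕ,
            (if j + ∑ i, f i = n then g j * ∏ i, g (f i) else 0)
            = g j * (if ∑ i, f i = n - j then ∏ i, g (f i) else 0) := by
          intro f
          have : (j + ∑ i, f i = n) ↔ (∑ i, f i = n - j) := by omega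
          by_cases h : ∑ i, f i = n - j
          · rw [if_pos (this.mpr h), if_pos h]
          · rw [if_neg (fun hc => h (this.mp hc)), if_neg h, mul_zero]
        rw [tsum_congr hpt, tsum_mul_left, ih]
      · rw [if_neg hj]
        have hpt : ∀ f : Fin m → ℕ,
            (if j + ∑ i, f i = n then g j * ∏ i, g (f i) else 0) = 0 := by
          intro f; rw [if_neg (by omega)]
        rw [tsum_congr hpt, tsum_zero]
    rw [tsum_congr hinner, tsum_eq_sum (s := Finset.range (n+1))
      (fun j hj => if_neg (by simp only [Finset.mem_range] at hj; omega))]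
    show _ = Dconv g (m+1) n
    simp only [Dconv]
    exact Finset.sum_congr rfl fun j hj =>
      if_pos (by simp only [Finset.mem_range] at hj; omega)

lemma ratio_pow (g : ℕ → ℝ) (hpos : ∀ᶠ n in atTop, 0 < g n) (ρ : ℝ)
    (hratio : Tendsto (fun n => g n / g (n + 1)) atTop (nhds ρ)) :
    ∀ i : ℕ, Tendsto (fun n => g (n - i) / g n) atTop (nhds (ρ ^ i)) := by
  obtain ⟨N0, hN0⟩ := eventually_atTop.mp hpos
  intro i
  induction i with
  | zero =>
    rw [pow_zero]
    apply Tendsto.congr' _ tendsto_const_nhds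
    filter_upwards [eventually_ge_atTop N0] with n hn
    simp [div_self (ne_of_gt (hN0 n hn))]
  | succ i ih =>
    have h1 : Tendsto (fun n => g (n - (i+1)) / g (n - (i+1) + 1)) atTop (nhds ρ) :=
      hratio.comp (tendsto_sub_atTop_nat (i+1))
    have h1' : Tendsto (fun n => g (n - (i+1)) / g (n - i)) atTop (nhds ρ) := by
      apply h1.congr'
      filter_upwards [eventually_ge_atTop (i+1)] with n hn
      congr 2
      omega
    have h2 := h1'.mul ih
    rw [← pow_succ'] at h2
    apply h2.congr'
    filter_upwards [eventually_ge_atTop (N0 + i)] with n hn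
    have hb : g (n - i) ≠ 0 := ne_of_gt (hN0 _ (by omega))
    field_simp


lemma split_sum (g b : ℕ → ℝ) (K n : ℕ) (hn : 2*K + 2 ≤ n) :
    ∑ i ∈ range (n+1), g i * b (n - i)
      = (∑ i ∈ range (K+1), g i * b (n-i)) + (∑ i ∈ Ico (K+1) (n-K), g i * b (n-i))
        + (∑ j ∈ range (K+1), g (n-j) * b j) := by
  have htail : ∑ i ∈ Ico (n-K) (n+1), g i * b (n-i) = ∑ j ∈ range (K+1), g (n-j) * b j := by
    apply Finset.sum_nbij' (fun i => n - i) (fun j => n - j)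
    · intro i hi; simp only [mem_Ico, mem_range] at *; omega
    · intro j hj; simp only [mem_Ico, mem_range] at *; omega
    · intro i hi; simp only [mem_Ico] at hi; omega
    · intro j hj; simp only [mem_range] at hj; omega
    · intro i hi; simp only [mem_Ico] at hi
      have : n - (n - i) = i := by omega
      rw [this]
  rw [range_eq_Ico, ← Finset.sum_Ico_consecutive (fun i => g i * b (n-i))
      (by omega : (0:ℕ) ≤ n - K) (by omega : n - K ≤ n + 1),
    ← Finset.sum_Ico_consecutive (fun i => g i * b (n-i))
      (Nat.zero_le (K+1)) (by omega : K + 1 ≤ n - K), ← range_eq_Ico, htail]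

lemma step_conv (g : ℕ → ℝ) (hg : ∀ n, 0 ≤ g n) (hpos : ∀ᶠ n in atTop, 0 < g n)
    (ρ Gρ : ℝ)
    (hratio : Tendsto (fun n => g n / g (n + 1)) atTop (nhds ρ))
    (hG : HasSum (fun n => g n * ρ ^ n) Gρ)
    (hconv : Tendsto (fun n => (∑ i ∈ Finset.range (n + 1), g i * g (n - i)) / g n)
      atTop (nhds (2 * Gρ)))
    (a : ℕ → ℝ) (ha : ∀ n, 0 ≤ a n) (A Abar : ℝ)
    (hAbar : HasSum (fun n => a n * ρ ^ n) Abar)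
    (hA : Tendsto (fun n => a n / g n) atTop (nhds A)) :
    Tendsto (fun n => (∑ i ∈ Finset.range (n + 1), g i * a (n - i)) / g n)
      atTop (nhds (Abar + A * Gρ)) := by
  obtain ⟨N0, hN0⟩ := eventually_atTop.mp hpos
  -- A is nonneg, and a j ≤ C g j for large j
  set C : ℝ := A + 1 with hC
  obtain ⟨N1', hN1'⟩ := eventually_atTop.mp (hA.eventually_lt_const (by linarith : A < C))
  set N1 : ℕ := max N0 N1' with hN1def
  have hN1 : ∀ j, N1 ≤ j → a j ≤ C * g j := by
    intro j hj
    have hgj : 0 < g j := hN0 j (le_trans (le_max_left _ _) hj)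
    have := hN1' j (le_trans (le_max_right _ _) hj)
    calc a j = (a j / g j) * g j := by field_simp
    _ ≤ C * g j := mul_le_mul_of_nonneg_right (le_of_lt this) (le_of_lt hgj)
  -- key: shifted quotient limits
  have key : ∀ (b : ℕ → ℝ) (B : ℝ), Tendsto (fun n => b n / g n) atTop (nhds B) →
      ∀ i : ℕ, Tendsto (fun n => b (n - i) / g n) atTop (nhds (B * ρ ^ i)) := by
    intro b B hB i
    have h1 : Tendsto (fun n => (b (n-i) / g (n-i)) * (g (n-i) / g n)) atTop
        (nhds (B * ρ ^ i)) :=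
      (hB.comp (tendsto_sub_atTop_nat i)).mul (ratio_pow g hpos ρ hratio i)
    apply h1.congr'
    filter_upwards [eventually_ge_atTop (N0 + i)] with n hn
    have hb : g (n - i) ≠ 0 := ne_of_gt (hN0 _ (by omega))
    field_simp
  -- head limit: (∑_{i ≤ K} g i * b (n-i)) / g n → B * ∑_{i ≤ K} g i ρ^i
  have headT : ∀ (b : ℕ → ℝ) (B : ℝ), Tendsto (fun n => b n / g n) atTop (nhds B) →
      ∀ K : ℕ, Tendsto (fun n => (∑ i ∈ range (K+1), g i * b (n-i)) / g n) atTop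
        (nhds (B * ∑ i ∈ range (K+1), g i * ρ ^ i)) := by
    intro b B hB K
    have : Tendsto (fun n => ∑ i ∈ range (K+1), g i * (b (n-i) / g n)) atTop
        (nhds (∑ i ∈ range (K+1), g i * (B * ρ ^ i))) :=
      tendsto_finset_sum _ (fun i _ => (key b B hB i).const_mul (g i))
    rw [show (∑ i ∈ range (K+1), g i * (B * ρ ^ i)) = B * ∑ i ∈ range (K+1), g i * ρ ^ i by
      rw [Finset.mul_sum]; apply Finset.sum_congr rfl; intros; ring] at this
    apply this.congr
    intro n
    rw [Finset.sum_div]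
    apply Finset.sum_congr rfl; intros; ring
  -- tail limit: (∑_{j ≤ K} g (n-j) * b j) / g n → ∑_{j ≤ K} b j ρ^j
  have tailT : ∀ (b : ℕ → ℝ) (K : ℕ),
      Tendsto (fun n => (∑ j ∈ range (K+1), g (n-j) * b j) / g n) atTop
        (nhds (∑ j ∈ range (K+1), b j * ρ ^ j)) := by
    intro b K
    have : Tendsto (fun n => ∑ j ∈ range (K+1), (g (n-j) / g n) * b j) atTop
        (nhds (∑ j ∈ range (K+1), ρ ^ j * b j)) :=
      tendsto_finset_sum _ (fun j _ =>
        Tendsto.mul_const (b j) (ratio_pow g hpos ρ hratio j))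
    rw [show (∑ j ∈ range (K+1), ρ ^ j * b j) = ∑ j ∈ range (K+1), b j * ρ ^ j by
      apply Finset.sum_congr rfl; intros; ring] at this
    apply this.congr
    intro n
    rw [Finset.sum_div]
    apply Finset.sum_congr rfl; intros; ring
  -- partial sums converge
  set HK : ℕ → ℝ := fun K => ∑ i ∈ range (K+1), g i * ρ ^ i with hHKdef
  set AK : ℕ → ℝ := fun K => ∑ i ∈ range (K+1), a i * ρ ^ i with hAKdef
  have hHK : Tendsto HK atTop (nhds Gρ) :=
    hG.tendsto_sum_nat.comp (tendsto_add_atTop_nat 1)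
  have hAK : Tendsto AK atTop (nhds Abar) :=
    hAbar.tendsto_sum_nat.comp (tendsto_add_atTop_nat 1)
  -- the middle g-sum limit, for each K
  have hmidg : ∀ K : ℕ, Tendsto (fun n => (∑ i ∈ Ico (K+1) (n-K), g i * g (n-i)) / g n)
      atTop (nhds (2 * Gρ - HK K - HK K)) := by
    intro K
    have h := (hconv.sub (headT g 1 (by
        apply Tendsto.congr' _ tendsto_const_nhds
        filter_upwards [eventually_ge_atTop N0] with n hn
        simp [div_self (ne_of_gt (hN0 n hn))]) K)).sub (tailT g K)
    rw [one_mul] at h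
    apply h.congr'
    filter_upwards [eventually_ge_atTop (2*K+2)] with n hn
    rw [split_sum g g K n hn]
    ring
  -- now the ε-argument
  rw [Metric.tendsto_atTop]
  intro ε hε
  set L : ℝ := Abar + A * Gρ with hL
  -- choose K
  have hCpos : 0 < C := by
    have hA0 : 0 ≤ A :=
      ge_of_tendsto hA (Eventually.of_forall fun n => div_nonneg (ha n) (hg n))
    linarith
  have hKev : ∀ᶠ K in atTop, N1 ≤ K ∧ |A * HK K + AK K - L| < ε/4 ∧
      C * (2 * Gρ - HK K - HK K) < ε/8 := by
    have t1 : Tendsto (fun K => A * HK K + AK K) atTop (nhds L) := by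
      rw [hL]; rw [show Abar + A * Gρ = A * Gρ + Abar by ring]
      exact (hHK.const_mul A).add hAK
    have t2 : Tendsto (fun K => C * (2 * Gρ - HK K - HK K)) atTop (nhds 0) := by
      have h0 : Tendsto (fun K => 2 * Gρ - (HK K + HK K)) atTop (nhds (2*Gρ - (Gρ + Gρ))) :=
        tendsto_const_nhds.sub (hHK.add hHK)
      rw [show 2*Gρ - (Gρ+Gρ) = (0:ℝ) by ring] at h0
      have h1 : Tendsto (fun K => 2 * Gρ - HK K - HK K) atTop (nhds 0) :=
        h0.congr (fun K => by ring)
      simpa using h1.const_mul C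
    refine (eventually_ge_atTop N1).and (Filter.Eventually.and ?_ ?_)
    · have := (Metric.tendsto_nhds.mp t1) (ε/4) (by linarith)
      filter_upwards [this] with K hK
      rwa [Real.dist_eq] at hK
    · have := (Metric.tendsto_nhds.mp t2) (ε/8) (by linarith)
      filter_upwards [this] with K hK
      rw [Real.dist_eq, sub_zero] at hK
      exact lt_of_le_of_lt (le_abs_self _) hK
  obtain ⟨K, hK1, hK2, hK3⟩ := hKev.exists
  -- eventual bounds in n
  have ev1 := Metric.tendsto_nhds.mp ((headT a A hA K).add (tailT a K)) (ε/4) (by linarith)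
  have ev2 := Metric.tendsto_nhds.mp ((hmidg K).const_mul C) (ε/8) (by linarith)
  rw [eventually_atTop] at ev1 ev2
  obtain ⟨M1, hM1⟩ := ev1
  obtain ⟨M2, hM2⟩ := ev2
  refine ⟨max (max M1 M2) (max (2*K+2) N0), fun n hn => ?_⟩
  have hn1 : M1 ≤ n := le_trans (le_trans (le_max_left _ _) (le_max_left _ _)) hn
  have hn2 : M2 ≤ n := le_trans (le_trans (le_max_right _ _) (le_max_left _ _)) hn
  have hn3 : 2*K+2 ≤ n := le_trans (le_trans (le_max_left _ _) (le_max_right _ _)) hn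
  have hn4 : N0 ≤ n := le_trans (le_trans (le_max_right _ _) (le_max_right _ _)) hn
  have hgn : 0 < g n := hN0 n hn4
  -- split S n
  rw [Real.dist_eq]
  set midS : ℝ := ∑ i ∈ Ico (K+1) (n-K), g i * a (n-i) with hmidS
  set midG : ℝ := ∑ i ∈ Ico (K+1) (n-K), g i * g (n-i) with hmidG
  have hsplit : (∑ i ∈ Finset.range (n + 1), g i * a (n - i)) / g n
      = (∑ i ∈ range (K+1), g i * a (n-i)) / g n + (∑ j ∈ range (K+1), g (n-j) * a j) / g n
        + midS / g n := by
    rw [split_sum g a K n hn3]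
    ring
  have hmid_nonneg : 0 ≤ midS / g n := by
    apply div_nonneg _ (le_of_lt hgn)
    exact Finset.sum_nonneg fun i _ => mul_nonneg (hg i) (ha _)
  have hmid_le : midS / g n ≤ C * (midG / g n) := by
    rw [mul_div_assoc']
    apply div_le_div_of_nonneg_right _ hgn.le
    rw [hmidS, hmidG, Finset.mul_sum]
    apply Finset.sum_le_sum
    intro i hi
    rw [mem_Ico] at hi
    have hni : N1 ≤ n - i := by omega
    calc g i * a (n-i) ≤ g i * (C * g (n-i)) :=
          mul_le_mul_of_nonneg_left (hN1 _ hni) (hg i)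
    _ = C * (g i * g (n-i)) := by ring
  have hmidbound : midS / g n < ε/4 := by
    have h2 := hM2 n hn2
    rw [Real.dist_eq] at h2
    have : C * (midG / g n) < C * (2 * Gρ - HK K - HK K) + ε/8 := by
      have := abs_sub_lt_iff.mp h2
      linarith [this.1]
    linarith
  have hHKeq : (A * ∑ i ∈ range (K+1), g i * ρ ^ i + ∑ j ∈ range (K+1), a j * ρ ^ j)
      = A * HK K + AK K := rfl
  have h1 := hM1 n hn1
  rw [Real.dist_eq, hHKeq] at h1
  have habs : |(∑ i ∈ Finset.range (n + 1), g i * a (n - i)) / g n - L|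
      ≤ |((∑ i ∈ range (K+1), g i * a (n-i)) / g n + (∑ j ∈ range (K+1), g (n-j) * a j) / g n)
          - (A * HK K + AK K)| + |A * HK K + AK K - L| + midS / g n := by
    rw [hsplit]
    have e1 : (∑ i ∈ range (K+1), g i * a (n-i)) / g n
        + (∑ j ∈ range (K+1), g (n-j) * a j) / g n + midS / g n - L
        = (((∑ i ∈ range (K+1), g i * a (n-i)) / g n
            + (∑ j ∈ range (K+1), g (n-j) * a j) / g n) - (A * HK K + AK K))
          + (A * HK K + AK K - L) + midS / g n := by ring
    rw [e1]
    calc |_ + _ + midS / g n| ≤ _ + _ + |midS / g n| := abs_add_three _ _ _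
    _ = _ := by rw [abs_of_nonneg hmid_nonneg]
  calc |(∑ i ∈ Finset.range (n + 1), g i * a (n - i)) / g n - L|
      ≤ _ := habs
    _ < ε/4 + ε/4 + ε/4 := add_lt_add (add_lt_add h1 hK2) hmidbound
    _ < ε := by linarith

lemma hasSum_conv (x y : ℕ → ℝ) (X Y : ℝ)
    (hX : HasSum x X) (hY : HasSum y Y) :
    HasSum (fun n => ∑ i ∈ range (n+1), x i * y (n-i)) (X * Y) := by
  have hxs : Summable fun n => ‖x n‖ := by
    simpa [Real.norm_eq_abs] using hX.summable.abs
  have hys : Summable fun n => ‖y n‖ := by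
    simpa [Real.norm_eq_abs] using hY.summable.abs
  have hsum : Summable (fun n => ∑ i ∈ range (n+1), x i * y (n-i)) :=
    (summable_norm_sum_mul_range_of_summable_norm hxs hys).of_norm
  have ht := tsum_mul_tsum_eq_tsum_sum_range_of_summable_norm hxs hys
  rw [hX.tsum_eq, hY.tsum_eq] at ht
  rw [show X * Y = ∑' n, ∑ i ∈ range (n+1), x i * y (n-i) from ht]
  exact hsum.hasSum

/-- Subexponentiality self-improves from the square convolution to all `m`-fold
convolutions: if `g_n/g_{n+1} → ρ` and `(Σ_{i+j=n} g_i g_j)/g_n → 2G(ρ) < ∞`,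
then `(Σ_{i₁+⋯+i_m=n} g_{i₁}⋯g_{i_m})/g_n → m·G(ρ)^{m−1}`. -/
theorem subexponential_convolution
    (g : ℕ → ℝ) (hg : ∀ n, 0 ≤ g n) (hpos : ∀ᶠ n in atTop, 0 < g n)
    (ρ Gρ : ℝ) (hρ : 0 < ρ)
    (hratio : Tendsto (fun n => g n / g (n + 1)) atTop (nhds ρ))
    (hG : HasSum (fun n => g n * ρ ^ n) Gρ)
    (hconv : Tendsto (fun n => (∑ i ∈ Finset.range (n + 1), g i * g (n - i)) / g n)
      atTop (nhds (2 * Gρ))) :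
    ∀ m : ℕ, 1 ≤ m →
      Tendsto (fun n =>
          (∑' f : Fin m → ℕ, if (∑ i, f i) = n then ∏ i, g (f i) else 0) / g n)
        atTop (nhds (m * Gρ ^ (m - 1))) := by
  obtain ⟨N0, hN0⟩ := eventually_atTop.mp hpos
  have hD1 : ∀ n, Dconv g 1 n = g n := by
    intro n
    show (∑ i ∈ Finset.range (n+1), g i * Dconv g 0 (n - i)) = g n
    rw [Finset.sum_eq_single n]
    · show g n * (if n - n = 0 then (1:ℝ) else 0) = g n
      simp
    · intro i hi hne
      rw [Finset.mem_range] at hi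
      show g i * (if n - i = 0 then (1:ℝ) else 0) = 0
      rw [if_neg (by omega), mul_zero]
    · intro h
      exact absurd (Finset.self_mem_range_succ n) h
  have aux : ∀ m : ℕ, 1 ≤ m → (HasSum (fun n => Dconv g m n * ρ ^ n) (Gρ ^ m)) ∧
      Tendsto (fun n => Dconv g m n / g n) atTop (nhds (m * Gρ ^ (m - 1))) := by
    intro m
    induction m with
    | zero => omega
    | succ m ih =>
      intro _
      by_cases hm : 1 ≤ m
      · obtain ⟨ihS, ihT⟩ := ih hm
        have hstep := step_conv g hg hpos ρ Gρ hratio hG hconv (Dconv g m)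
          (Dconv_nonneg g hg m) (m * Gρ ^ (m - 1)) (Gρ ^ m) ihS ihT
        have hSum : HasSum (fun n => Dconv g (m+1) n * ρ ^ n) (Gρ ^ (m+1)) := by
          have h := hasSum_conv _ _ _ _ hG ihS
          rw [show Gρ * Gρ ^ m = Gρ ^ (m+1) by ring] at h
          apply h.congr_fun
          intro n
          symm
          show (∑ i ∈ Finset.range (n+1), (g i * ρ ^ i) * (Dconv g m (n-i) * ρ ^ (n-i)))
              = (∑ i ∈ Finset.range (n+1), g i * Dconv g m (n - i)) * ρ ^ n
          rw [Finset.sum_mul]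
          apply Finset.sum_congr rfl
          intro i hi
          rw [Finset.mem_range] at hi
          have : ρ ^ i * ρ ^ (n - i) = ρ ^ n := by
            rw [← pow_add]
            congr 1
            omega
          calc (g i * ρ ^ i) * (Dconv g m (n-i) * ρ ^ (n-i))
              = g i * Dconv g m (n-i) * (ρ ^ i * ρ ^ (n-i)) := by ring
          _ = g i * Dconv g m (n-i) * ρ ^ n := by rw [this]
        refine ⟨hSum, ?_⟩
        have hval : Gρ ^ m + (↑m * Gρ ^ (m-1)) * Gρ = (↑(m+1) : ℝ) * Gρ ^ ((m+1) - 1) := by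
          have h1 : Gρ ^ (m-1) * Gρ = Gρ ^ m := by
            rw [← pow_succ]
            congr 1
            omega
          have h2 : (m+1) - 1 = m := rfl
          rw [h2]
          push_cast
          rw [mul_assoc, h1]
          ring
        rw [← hval]
        exact hstep
      · have hm0 : m = 0 := by omega
        subst hm0
        constructor
        · rw [pow_one]
          exact hG.congr_fun (fun n => by rw [hD1])
        · have : Tendsto (fun n => g n / g n) atTop (nhds 1) := by
            apply Tendsto.congr' _ tendsto_const_nhds
            filter_upwards [eventually_ge_atTop N0] with n hn
            exact (div_self (ne_of_gt (hN0 n hn))).symm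
          have h2 : Tendsto (fun n => Dconv g 1 n / g n) atTop (nhds 1) :=
            this.congr (fun n => by rw [hD1])
          simpa using h2
  intro m hm
  have := (aux m hm).2
  apply this.congr
  intro n
  rw [tsum_eq_Dconv]
end
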